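/- arXiv:2107.12673 — 2 statements merged into one kernel-verified Lean document; each statement's English description precedes it below -/
import Mathlib

section
/- If Slater's condition holds (there exists m in the interior of X₁ with S₁(m) < κ), then the concave dual function g(λ) is strictly decreasing for all sufficiently large λ, and hence the supremum of g over λ ≥ 0 is attained at some λ* ≥ 0. -/
/-- The relaxed feasible set `X₁ = {m ∈ [0,1]^D : ‖m‖₁ ≤ σ}`. -/
def maskSetX1 (D σ : ℕ) : Set (Fin D → ℝ) :=
  {m | (∀ i, m i ∈ Set.Icc (0 : ℝ) 1) ∧ ∑ i, |m i| ≤ (σ : ℝ)}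

/-- The dual function `g(λ) = inf_{m ∈ X₁} [S₀(m) + λ(S₁(m) − κ)]`. -/
noncomputable def dualFun (D σ : ℕ) (κ : ℝ) (S0 S1 : (Fin D → ℝ) →ₗ[ℝ] ℝ) (lam : ℝ) : ℝ :=
  sInf ((fun m => S0 m + lam * (S1 m - κ)) '' maskSetX1 D σ)

lemma maskSetX1_compact (D σ : ℕ) : IsCompact (maskSetX1 D σ) := by
  have hpi : IsCompact (Set.pi Set.univ fun _ : Fin D => Set.Icc (0:ℝ) 1) :=
    isCompact_univ_pi fun _ => isCompact_Icc
  refine hpi.of_isClosed_subset ?_ ?_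
  · have h1 : IsClosed (Set.pi Set.univ fun _ : Fin D => Set.Icc (0:ℝ) 1) :=
      isClosed_set_pi fun i _ => isClosed_Icc
    have h2 : IsClosed {m : Fin D → ℝ | ∑ i, |m i| ≤ (σ:ℝ)} :=
      isClosed_le (continuous_finset_sum _ fun i _ => (continuous_apply i).abs)
        continuous_const
    have : maskSetX1 D σ =
        (Set.pi Set.univ fun _ : Fin D => Set.Icc (0:ℝ) 1) ∩
          {m : Fin D → ℝ | ∑ i, |m i| ≤ (σ:ℝ)} := by
      ext m; simp [maskSetX1, Set.mem_pi, Pi.le_def, forall_and]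
    rw [this]; exact h1.inter h2
  · intro m hm
    simp only [Set.mem_pi, Set.mem_univ, forall_true_left]
    exact fun i => hm.1 i

lemma maskSetX1_zero_mem (D σ : ℕ) : (0 : Fin D → ℝ) ∈ maskSetX1 D σ :=
  ⟨fun i => by simp, by simp⟩

/-- if Slater's condition holds (some `m` in the interior of `X₁`
satisfies `S₁(m) < κ`), then `g` is strictly decreasing for all sufficiently
large `λ`, and the supremum of `g` over `λ ≥ 0` is attained at some `λ* ≥ 0`. -/
theorem dual_sup_attained_of_slater
    (D : ℕ) (σ : ℕ) (hσ1 : 1 ≤ σ) (hσD : σ ≤ D) (κ : ℝ)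
    (S0 S1 : (Fin D → ℝ) →ₗ[ℝ] ℝ)
    (hslater : ∃ m ∈ interior (maskSetX1 D σ), S1 m < κ) :
    (∃ lam0 : ℝ, 0 ≤ lam0 ∧
        StrictAntiOn (dualFun D σ κ S0 S1) (Set.Ici lam0)) ∧
      ∃ lamStar : ℝ, 0 ≤ lamStar ∧
        ∀ lam : ℝ, 0 ≤ lam → dualFun D σ κ S0 S1 lam ≤ dualFun D σ κ S0 S1 lamStar := by
  obtain ⟨m₀, hm₀int, hm₀⟩ := hslater
  have hm₀X : m₀ ∈ maskSetX1 D σ := interior_subset hm₀int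
  have hXc := maskSetX1_compact D σ
  have h0X := maskSetX1_zero_mem D σ
  have hXne : (maskSetX1 D σ).Nonempty := ⟨0, h0X⟩
  set g := dualFun D σ κ S0 S1 with hg
  set f : ℝ → (Fin D → ℝ) → ℝ := fun lam m => S0 m + lam * (S1 m - κ) with hf
  have hcont : ∀ lam : ℝ, Continuous (f lam) := fun lam =>
    (S0.continuous_of_finiteDimensional).add
      (continuous_const.mul ((S1.continuous_of_finiteDimensional).sub continuous_const))
  have hmin : ∀ lam : ℝ, ∃ m ∈ maskSetX1 D σ, IsMinOn (f lam) (maskSetX1 D σ) m :=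
    fun lam => hXc.exists_isMinOn hXne (hcont lam).continuousOn
  have hg_eq : ∀ lam m, m ∈ maskSetX1 D σ → IsMinOn (f lam) (maskSetX1 D σ) m →
      g lam = f lam m := by
    intro lam m hmX hmmin
    have hleast : IsLeast ((f lam) '' maskSetX1 D σ) (f lam m) := by
      refine ⟨Set.mem_image_of_mem _ hmX, ?_⟩
      rintro y ⟨x, hx, rfl⟩
      exact isMinOn_iff.mp hmmin x hx
    have h := hleast.csInf_eq
    simpa [hg, hf, dualFun] using h
  have hg_le : ∀ lam m, m ∈ maskSetX1 D σ → g lam ≤ f lam m := by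
    intro lam m hmX
    obtain ⟨m', hm'X, hm'min⟩ := hmin lam
    rw [hg_eq lam m' hm'X hm'min]
    exact isMinOn_iff.mp hm'min m hmX
  obtain ⟨B, hB⟩ := hXc.exists_bound_of_continuousOn
    (S0.continuous_of_finiteDimensional).continuousOn
  have hB' : ∀ m ∈ maskSetX1 D σ, |S0 m| ≤ B := by
    intro m hm; rw [← Real.norm_eq_abs]; exact hB m hm
  have hB0 : 0 ≤ B := by
    have := hB' 0 h0X; simp at this; linarith
  set c := κ - S1 m₀ with hc
  have hcpos : 0 < c := by rw [hc]; linarith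
  set lam0 := (2 * B) / c + 1 with hlam0
  have hlam0pos : 0 < lam0 := by positivity
  have hkey : ∀ lam, lam0 ≤ lam → ∀ m, m ∈ maskSetX1 D σ →
      IsMinOn (f lam) (maskSetX1 D σ) m → S1 m < κ := by
    intro lam hlam m hmX hmmin
    have h1 : f lam m ≤ f lam m₀ := isMinOn_iff.mp hmmin m₀ hm₀X
    have hBm := abs_le.mp (hB' m hmX)
    have hBm0 := abs_le.mp (hB' m₀ hm₀X)
    have hlampos : 0 < lam := lt_of_lt_of_le hlam0pos hlam
    simp only [hf] at h1
    have e : S1 m₀ - κ = -c := by rw [hc]; ring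
    rw [e] at h1
    have h2 : lam * (S1 m - κ) ≤ 2 * B - lam * c := by nlinarith
    have hdc : (2*B)/c * c = 2*B := div_mul_cancel₀ _ (ne_of_gt hcpos)
    have h5 : lam0 * c ≤ lam * c := mul_le_mul_of_nonneg_right hlam hcpos.le
    have h6 : lam0 * c = 2*B + c := by rw [hlam0, add_mul, one_mul, hdc]
    have h3 : 2 * B - lam * c < 0 := by linarith
    nlinarith
  have hanti : StrictAntiOn g (Set.Ici lam0) := by
    intro a ha b hb hab
    obtain ⟨m, hmX, hmmin⟩ := hmin a
    have hS1 : S1 m < κ := hkey a (Set.mem_Ici.mp ha) m hmX hmmin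
    have hga : g a = f a m := hg_eq a m hmX hmmin
    have hgb : g b ≤ f b m := hg_le b m hmX
    have hfab : f b m < f a m := by simp only [hf]; nlinarith
    linarith
  obtain ⟨K, hK⟩ := hXc.exists_bound_of_continuousOn
    ((S1.continuous_of_finiteDimensional).sub continuous_const).continuousOn
  have hK' : ∀ m ∈ maskSetX1 D σ, |S1 m - κ| ≤ K := by
    intro m hm; rw [← Real.norm_eq_abs]; exact hK m hm
  have hK0 : 0 ≤ K := le_trans (abs_nonneg _) (hK' 0 h0X)
  have hlip : ∀ a b : ℝ, g a ≤ g b + K * |a - b| := by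
    intro a b
    obtain ⟨m, hmX, hmmin⟩ := hmin b
    have h1 : g a ≤ f a m := hg_le a m hmX
    have h2 : g b = f b m := hg_eq b m hmX hmmin
    have h3 : f a m = f b m + (a - b) * (S1 m - κ) := by simp only [hf]; ring
    have h4 : (a - b) * (S1 m - κ) ≤ K * |a - b| := by
      calc (a-b)*(S1 m - κ) ≤ |(a-b)*(S1 m - κ)| := le_abs_self _
        _ = |a-b| * |S1 m - κ| := abs_mul _ _
        _ ≤ |a-b| * K := by
              exact mul_le_mul_of_nonneg_left (hK' m hmX) (abs_nonneg _)
        _ = K * |a-b| := mul_comm _ _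
    linarith
  have hgcont : Continuous g := by
    have hlw : LipschitzWith (Real.toNNReal K) g := by
      apply LipschitzWith.of_dist_le_mul
      intro a b
      rw [Real.dist_eq, Real.dist_eq, Real.coe_toNNReal K hK0, abs_sub_le_iff]
      have l1 := hlip a b
      have l2 := hlip b a
      rw [abs_sub_comm b a] at l2
      constructor <;> linarith
    exact hlw.continuous
  obtain ⟨lamStar, hlamStarmem, hmax⟩ :=
    (isCompact_Icc (a := (0:ℝ)) (b := lam0)).exists_isMaxOn
      ⟨0, Set.mem_Icc.mpr ⟨le_refl 0, hlam0pos.le⟩⟩ hgcont.continuousOn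
  refine ⟨⟨lam0, hlam0pos.le, hanti⟩, lamStar, hlamStarmem.1, ?_⟩
  intro lam hlam
  rcases le_or_gt lam lam0 with h | h
  · exact isMaxOn_iff.mp hmax lam ⟨hlam, h⟩
  · have h1 : g lam < g lam0 :=
      hanti (Set.mem_Ici.mpr (le_refl lam0)) (Set.mem_Ici.mpr h.le) h
    have h2 : g lam0 ≤ g lamStar :=
      isMaxOn_iff.mp hmax lam0 ⟨hlam0pos.le, le_refl _⟩
    linarith
end

section
/- If κ ≥ κ_max := max over I ∈ σ-argmin{i : s_i⁽⁰⁾ < 0} of Σ_{i∈I} s_i⁽¹⁾, then there exists a solution of the unconstrained problem min_{m ∈ X} S₀(m) that also satisfies S₁(m) ≤ κ, and hence the constrained and unconstrained problems have the same optimal value. -/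
/-- The discrete feasible set `X = {m ∈ {0,1}^D : ‖m‖₀ ≤ σ}`. -/
def maskSetX (D σ : ℕ) : Set (Fin D → ℝ) :=
  {m | (∀ i, m i = 0 ∨ m i = 1) ∧ (Finset.univ.filter (fun i => m i ≠ 0)).card ≤ σ}

/-- `I` is a `σ`-argmin set for the scores `α`: it consists of indices with
`α i < 0`, has cardinality `min σ #{i : α i < 0}`, and attains the smallest
values among the negative ones. -/
def IsSigmaArgmin {D : ℕ} (σ : ℕ) (α : Fin D → ℝ) (I : Finset (Fin D)) : Prop :=
  (∀ i ∈ I, α i < 0) ∧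
    I.card = min σ (Finset.univ.filter (fun i => α i < 0)).card ∧
    ∀ j ∈ I, ∀ i ∉ I, α i < 0 → α j ≤ α i

/-- Greedy selection of `k` smallest values. -/
lemma exists_initial {D : ℕ} (α : Fin D → ℝ) (N : Finset (Fin D)) :
    ∀ k, k ≤ N.card → ∃ I ⊆ N, I.card = k ∧ ∀ j ∈ I, ∀ i ∈ N \ I, α j ≤ α i := by
  intro k
  induction k with
  | zero => intro _; exact ⟨∅, Finset.empty_subset _, rfl, by simp⟩
  | succ n ih =>
    intro hk
    obtain ⟨I, hIN, hcard, hmin⟩ := ih (Nat.le_of_succ_le hk)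
    have hne : (N \ I).Nonempty := by
      rw [← Finset.card_pos, Finset.card_sdiff_of_subset hIN]
      omega
    obtain ⟨i₀, hi₀, hi₀min⟩ := Finset.exists_min_image (N \ I) α hne
    have hi₀I : i₀ ∉ I := (Finset.mem_sdiff.mp hi₀).2
    refine ⟨insert i₀ I, ?_, ?_, ?_⟩
    · exact Finset.insert_subset (Finset.mem_sdiff.mp hi₀).1 hIN
    · rw [Finset.card_insert_of_notMem hi₀I, hcard]
    · intro j hj i hi
      have hi' : i ∈ N \ I := by
        rcases Finset.mem_sdiff.mp hi with ⟨h1, h2⟩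
        exact Finset.mem_sdiff.mpr ⟨h1, fun h => h2 (Finset.mem_insert_of_mem h)⟩
      rcases Finset.mem_insert.mp hj with rfl | hj
      · exact hi₀min i hi'
      · exact hmin j hj i hi'

/-- A `σ`-argmin set always exists. -/
lemma exists_argmin {D : ℕ} (σ : ℕ) (α : Fin D → ℝ) :
    ∃ I, IsSigmaArgmin σ α I := by
  set N := Finset.univ.filter (fun i => α i < 0) with hN
  obtain ⟨I, hIN, hcard, hmin⟩ := exists_initial α N (min σ N.card) (min_le_right _ _)
  refine ⟨I, fun i hi => (Finset.mem_filter.mp (hIN hi)).2, hcard, ?_⟩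
  intro j hj i hiI hαi
  exact hmin j hj i (Finset.mem_sdiff.mpr ⟨Finset.mem_filter.mpr ⟨Finset.mem_univ _, hαi⟩, hiI⟩)

/-- A `σ`-argmin set minimizes `∑ α` among sets of cardinality `≤ σ`. -/
lemma argmin_sum_le {D σ : ℕ} {α : Fin D → ℝ} {I : Finset (Fin D)}
    (h : IsSigmaArgmin σ α I) (J : Finset (Fin D)) (hJ : J.card ≤ σ) :
    ∑ i ∈ I, α i ≤ ∑ i ∈ J, α i := by
  obtain ⟨hneg, hcard, hmin⟩ := h
  set N := Finset.univ.filter (fun i => α i < 0) with hNdef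
  set A := J ∩ N with hAdef
  have hAN : A ⊆ N := Finset.inter_subset_right
  have hAI : A.card ≤ I.card := by
    rw [hcard]
    exact le_min (le_trans (Finset.card_le_card Finset.inter_subset_left) hJ)
      (Finset.card_le_card hAN)
  have step1 : ∑ i ∈ A, α i ≤ ∑ i ∈ J, α i := by
    have : ∑ i ∈ J ∩ N, α i + ∑ i ∈ J \ N, α i = ∑ i ∈ J, α i :=
      Finset.sum_inter_add_sum_sdiff J N α
    rw [← this]
    have : 0 ≤ ∑ i ∈ J \ N, α i := by
      apply Finset.sum_nonneg
      intro i hi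
      have := (Finset.mem_sdiff.mp hi).2
      simp only [hNdef, Finset.mem_filter, Finset.mem_univ, true_and] at this
      linarith
    linarith
  have step2 : ∑ i ∈ I, α i ≤ ∑ i ∈ A, α i := by
    have d1 : ∑ i ∈ I ∩ A, α i + ∑ i ∈ I \ A, α i = ∑ i ∈ I, α i :=
      Finset.sum_inter_add_sum_sdiff I A α
    have d2 : ∑ i ∈ A ∩ I, α i + ∑ i ∈ A \ I, α i = ∑ i ∈ A, α i :=
      Finset.sum_inter_add_sum_sdiff A I α
    have hIA : I ∩ A = A ∩ I := Finset.inter_comm I A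
    have key : ∑ i ∈ I \ A, α i ≤ ∑ i ∈ A \ I, α i := by
      rcases Finset.eq_empty_or_nonempty (A \ I) with he | hne
      · rw [he, Finset.sum_empty]
        apply Finset.sum_nonpos
        intro j hj
        exact le_of_lt (hneg j (Finset.mem_sdiff.mp hj).1)
      · obtain ⟨i₀, hi₀, hi₀min⟩ := Finset.exists_min_image (A \ I) α hne
        have hi₀N : α i₀ < 0 := by
          have := hAN (Finset.mem_sdiff.mp hi₀).1
          simp only [hNdef, Finset.mem_filter, Finset.mem_univ, true_and] at this
          exact this
        have hi₀I : i₀ ∉ I := (Finset.mem_sdiff.mp hi₀).2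
        have hcards : (A \ I).card ≤ (I \ A).card := by
          have c1 := Finset.card_inter_add_card_sdiff I A
          have c2 := Finset.card_inter_add_card_sdiff A I
          have : (I ∩ A).card = (A ∩ I).card := by rw [Finset.inter_comm]
          omega
        have b1 : ∑ i ∈ I \ A, α i ≤ (I \ A).card • α i₀ := by
          apply Finset.sum_le_card_nsmul
          intro j hj
          exact hmin j (Finset.mem_sdiff.mp hj).1 i₀ hi₀I hi₀N
        have b2 : (A \ I).card • α i₀ ≤ ∑ i ∈ A \ I, α i :=
          Finset.card_nsmul_le_sum (A \ I) α (α i₀) (fun i hi => hi₀min i hi)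
        have b3 : ((I \ A).card : ℝ) * α i₀ ≤ ((A \ I).card : ℝ) * α i₀ :=
          mul_le_mul_of_nonpos_right (Nat.cast_le.mpr hcards) (le_of_lt hi₀N)
        simp only [nsmul_eq_mul, smul_eq_mul] at b1 b2
        linarith
    rw [← d1, ← d2, hIA]
    linarith
  linarith

/-- A `{0,1}`-valued vector equals the sum of `Pi.single`'s over its support. -/
lemma mask_eq_sum_single {D : ℕ} (m : Fin D → ℝ) (hm : ∀ i, m i = 0 ∨ m i = 1) :
    m = ∑ i ∈ Finset.univ.filter (fun i => m i ≠ 0), Pi.single i (1 : ℝ) := by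
  funext j
  rw [Finset.sum_apply]
  simp only [Pi.single_apply, Finset.sum_ite_eq, Finset.mem_filter, Finset.mem_univ, true_and]
  by_cases h : m j = 0
  · simp [h]
  · rw [if_pos h]
    exact (hm j).resolve_left h

/-- if `κ ≥ κ_max`, i.e. `κ ≥ ∑_{i∈I} s_i⁽¹⁾` for every
`I ∈ σ-argmin{i : s_i⁽⁰⁾ < 0}`, then some solution of the unconstrained
problem `min_{m ∈ X} S₀(m)` also satisfies `S₁(m) ≤ κ`; hence the constrained
and unconstrained problems have the same optimal value. -/
theorem kappa_max_unconstrained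
    (D : ℕ) (σ : ℕ) (hσ1 : 1 ≤ σ) (hσD : σ ≤ D) (κ : ℝ)
    (S0 S1 : (Fin D → ℝ) →ₗ[ℝ] ℝ)
    (s0 s1 : Fin D → ℝ)
    (hs0 : ∀ i, s0 i = S0 (Pi.single i 1))
    (hs1 : ∀ i, s1 i = S1 (Pi.single i 1))
    (hκ : ∀ I : Finset (Fin D), IsSigmaArgmin σ s0 I → (∑ i ∈ I, s1 i) ≤ κ) :
    ∃ m ∈ maskSetX D σ, S1 m ≤ κ ∧ (∀ m' ∈ maskSetX D σ, S0 m ≤ S0 m') ∧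
      S0 m = sInf (S0 '' maskSetX D σ) ∧
      S0 m = sInf (S0 '' {m' ∈ maskSetX D σ | S1 m' ≤ κ}) := by
  obtain ⟨I, hI⟩ := exists_argmin σ s0
  set m : Fin D → ℝ := fun i => if i ∈ I then 1 else 0 with hmdef
  have hm01 : ∀ i, m i = 0 ∨ m i = 1 := by
    intro i; by_cases h : i ∈ I <;> simp [hmdef, h]
  have hsupp : Finset.univ.filter (fun i => m i ≠ 0) = I := by
    ext i
    by_cases h : i ∈ I <;> simp [hmdef, h]
  have hIcard : I.card ≤ σ := hI.2.1 ▸ min_le_left _ _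
  have hmX : m ∈ maskSetX D σ := ⟨hm01, by rw [hsupp]; exact hIcard⟩
  have hmsum : m = ∑ i ∈ I, Pi.single i (1:ℝ) := by
    rw [mask_eq_sum_single m hm01, hsupp]
  have hS0m : S0 m = ∑ i ∈ I, s0 i := by
    rw [hmsum, map_sum]
    exact Finset.sum_congr rfl (fun i _ => (hs0 i).symm)
  have hS1m : S1 m = ∑ i ∈ I, s1 i := by
    rw [hmsum, map_sum]
    exact Finset.sum_congr rfl (fun i _ => (hs1 i).symm)
  have hopt : ∀ m' ∈ maskSetX D σ, S0 m ≤ S0 m' := by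
    intro m' hm'
    obtain ⟨h01, hc⟩ := hm'
    set J := Finset.univ.filter (fun i => m' i ≠ 0) with hJ
    have hS0m' : S0 m' = ∑ i ∈ J, s0 i := by
      rw [mask_eq_sum_single m' h01, map_sum]
      exact Finset.sum_congr rfl (fun i _ => (hs0 i).symm)
    rw [hS0m, hS0m']
    exact argmin_sum_le hI J hc
  refine ⟨m, hmX, ?_, hopt, ?_, ?_⟩
  · rw [hS1m]; exact hκ I hI
  · apply le_antisymm
    · exact le_csInf ⟨S0 m, ⟨m, hmX, rfl⟩⟩
        (fun b ⟨m', hm', hb⟩ => hb ▸ hopt m' hm')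
    · exact csInf_le ⟨S0 m, fun b ⟨m', hm', hb⟩ => hb ▸ hopt m' hm'⟩ ⟨m, hmX, rfl⟩
  · have hmem : m ∈ {m' ∈ maskSetX D σ | S1 m' ≤ κ} :=
      ⟨hmX, by rw [hS1m]; exact hκ I hI⟩
    apply le_antisymm
    · exact le_csInf ⟨S0 m, ⟨m, hmem, rfl⟩⟩
        (fun b ⟨m', hm', hb⟩ => hb ▸ hopt m' hm'.1)
    · exact csInf_le ⟨S0 m, fun b ⟨m', hm', hb⟩ => hb ▸ hopt m' hm'.1⟩ ⟨m, hmem, rfl⟩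
end
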